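/- Let G be a connected finite simple graph with spectral radius ρ, let x be a positive eigenvector of the adjacency matrix of G corresponding to ρ, and let u* be a vertex at which x attains its maximum entry. Set N = N(u*), W = V(G) ∖ N[u*], A₊ = {v ∈ N : v has at least one neighbor in N}, and A₀ = N ∖ A₊. Then ρ² − ρ ≤ |N| + 2·e(A₊) − |A₊| + e(N, W) − Σ_{v ∈ A₀} x_v / x_{u*}, where e(A₊) is the number of edges of G with both endpoints in A₊ and e(N, W) is the number of edges of G with one endpoint in N and the other in W. -/

import Mathlib

open SimpleGraph Matrix

/-- `H` occurs as a subgraph of `G`: an injective map sending adjacent vertices to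
adjacent vertices. -/
def ContainsSub {α β : Type*} (H : SimpleGraph α) (G : SimpleGraph β) : Prop :=
  ∃ f : α → β, Function.Injective f ∧ ∀ ⦃a b⦄, H.Adj a b → G.Adj (f a) (f b)

/-- The graph `H(4,3)`: a 4-cycle `0-1-2-3-0` and a triangle `0-4-5-0`
sharing the common vertex `0`. -/
def H43 : SimpleGraph (Fin 6) :=
  SimpleGraph.fromEdgeSet {s(0,1), s(1,2), s(2,3), s(3,0), s(0,4), s(4,5), s(5,0)}

/-- `G` is `H(4,3)`-free. -/
def H43Free {β : Type*} (G : SimpleGraph β) : Prop := ¬ ContainsSub H43 G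

open Classical in
/-- The real adjacency matrix of a simple graph. -/
noncomputable def adjMat {V : Type*} (G : SimpleGraph V) : Matrix V V ℝ :=
  fun i j => if G.Adj i j then 1 else 0

/-- The spectral radius of a finite simple graph: the largest eigenvalue of its
adjacency matrix. -/
noncomputable def specRad {V : Type*} [Fintype V] (G : SimpleGraph V) : ℝ :=
  sSup {t : ℝ | ∃ x : V → ℝ, x ≠ 0 ∧ (adjMat G).mulVec x = t • x}

/-- `S_{n,2} = K₂ ∨ (n-2)K₁`: vertices `0` and `1` are adjacent to everything. -/
def Sgraph (n : ℕ) : SimpleGraph (Fin n) where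
  Adj i j := i ≠ j ∧ (i.val < 2 ∨ j.val < 2)
  symm := by constructor; rintro i j ⟨h1, h2⟩; exact ⟨h1.symm, h2.symm⟩
  loopless := by constructor; rintro i ⟨h1, _⟩; exact h1 rfl

/-- `S⁻_{n,2}`: the graph `S_{n,2}` with the edge `{1,2}` (an edge incident to a
vertex of degree two) deleted. -/
def SgraphMinus (n : ℕ) : SimpleGraph (Fin n) where
  Adj i j := i ≠ j ∧ (i.val < 2 ∨ j.val < 2) ∧
    ¬(i.val = 1 ∧ j.val = 2) ∧ ¬(i.val = 2 ∧ j.val = 1)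
  symm := by
    constructor; rintro i j ⟨h1, h2, h3, h4⟩
    exact ⟨h1.symm, h2.symm, fun hc => h4 ⟨hc.2, hc.1⟩, fun hc => h3 ⟨hc.2, hc.1⟩⟩
  loopless := by constructor; rintro i ⟨h1, _⟩; exact h1 rfl

/-- The graph obtained from `S_{k,2}` (on vertices `0,…,k-1`, with `0,1` dominating)
by joining the maximum degree vertex `0` to `l` new vertices `k,…,k+l-1`. -/
def Fgraph (k l : ℕ) : SimpleGraph (Fin (k + l)) where
  Adj i j := i ≠ j ∧ (i.val = 0 ∨ j.val = 0 ∨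
    (i.val < k ∧ j.val < k ∧ (i.val = 1 ∨ j.val = 1)))
  symm := by
    constructor; rintro i j ⟨h1, h2⟩
    refine ⟨h1.symm, ?_⟩
    rcases h2 with h | h | ⟨ha, hb, hc⟩
    · exact Or.inr (Or.inl h)
    · exact Or.inl h
    · exact Or.inr (Or.inr ⟨hb, ha, hc.symm⟩)
  loopless := by constructor; rintro i ⟨h1, _⟩; exact h1 rfl

/-- The star `K_{1,t}` with center `0`. -/
def starG (t : ℕ) : SimpleGraph (Fin (t + 1)) where
  Adj i j := i ≠ j ∧ (i.val = 0 ∨ j.val = 0)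
  symm := by constructor; rintro i j ⟨h1, h2⟩; exact ⟨h1.symm, h2.symm⟩
  loopless := by constructor; rintro i ⟨h1, _⟩; exact h1 rfl

/-- `e(S)`: the number of edges of `G` with both endpoints in `S`. -/
noncomputable def eIn {V : Type*} (G : SimpleGraph V) (S : Set V) : ℕ :=
  {e ∈ G.edgeSet | ∀ v ∈ e, v ∈ S}.ncard

/-- `e(S,T)`: the number of edges of `G` with one endpoint in `S` and the other in `T`. -/
noncomputable def eBetween {V : Type*} (G : SimpleGraph V) (S T : Set V) : ℕ :=
  {e ∈ G.edgeSet | ∃ a ∈ S, ∃ b ∈ T, e = s(a, b)}.ncard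

/-- `G` attains the maximum spectral radius among all `H(4,3)`-free graphs with `m`
edges and no isolated vertices. -/
def IsExtremal (m : ℕ) {V : Type*} [Fintype V] (G : SimpleGraph V) : Prop :=
  H43Free G ∧ G.edgeSet.ncard = m ∧ (∀ v : V, ∃ w, G.Adj v w) ∧
    ∀ (n : ℕ) (G' : SimpleGraph (Fin n)), H43Free G' → G'.edgeSet.ncard = m →
      (∀ v, ∃ w, G'.Adj v w) → specRad G' ≤ specRad G

/-- For a connected graph `G` with Perron vector `x` maximized at `u`,
`ρ² − ρ ≤ |N| + 2 e(A₊) − |A₊| + e(N,W) − Σ_{v ∈ A₀} x_v / x_u`. -/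
theorem stmt8 {V : Type*} [Fintype V] (G : SimpleGraph V) (hconn : G.Connected)
    (x : V → ℝ) (hxpos : ∀ v, 0 < x v)
    (heig : (adjMat G).mulVec x = specRad G • x)
    (u : V) (hmaxx : ∀ v, x v ≤ x u)
    (N W Ap A0 : Set V)
    (hN : N = G.neighborSet u)
    (hW : W = (insert u N)ᶜ)
    (hAp : Ap = {v ∈ N | ∃ w ∈ N, G.Adj v w})
    (hA0 : A0 = N \ Ap) :
    specRad G ^ 2 - specRad G ≤
      (N.ncard : ℝ) + 2 * (eIn G Ap : ℝ) - (Ap.ncard : ℝ) + (eBetween G N W : ℝ)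
        - ∑ᶠ v ∈ A0, x v / x u := by
  classical
  set ρ := specRad G with hρdef
  have hxu : (0:ℝ) < x u := hxpos u
  set Nf : Finset V := Finset.univ.filter (fun v => G.Adj u v) with hNfdef
  set Apf : Finset V := Finset.univ.filter
      (fun v => G.Adj u v ∧ ∃ w, G.Adj u w ∧ G.Adj v w) with hApfdef
  set A0f : Finset V := Nf \ Apf with hA0fdef
  set Wf : Finset V := Finset.univ.filter (fun v => ¬ v = u ∧ ¬ G.Adj u v) with hWfdef
  have hNset : N = ↑Nf := by
    rw [hN]; ext v; simp [hNfdef, SimpleGraph.mem_neighborSet]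
  have hApset : Ap = ↑Apf := by
    rw [hAp, hNset]; ext v
    simp [hApfdef, hNfdef]
  have hA0set : A0 = ↑A0f := by
    rw [hA0, hApset, hNset, hA0fdef, Finset.coe_sdiff]
  have hWset : W = ↑Wf := by
    rw [hW, hNset]; ext v
    simp [hWfdef, hNfdef]
  have heq : ∀ v, ∑ w ∈ Finset.univ.filter (fun w => G.Adj v w), x w = ρ * x v := by
    intro v
    have h := congrFun heig v
    simp only [Matrix.mulVec, dotProduct, adjMat, Pi.smul_apply, smul_eq_mul] at h
    rw [← h, Finset.sum_filter]
    refine Finset.sum_congr rfl (fun w _ => ?_)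
    by_cases hw : G.Adj v w <;> simp [hw]
  have hrho_u : ∑ v ∈ Nf, x v = ρ * x u := by
    rw [hNfdef]; exact heq u
  have hNWdisj : ∀ a, a ∈ Nf → a ∈ Wf → False := by
    intro a h1 h2
    rw [hNfdef] at h1; rw [hWfdef] at h2
    simp only [Finset.mem_filter, Finset.mem_univ, true_and] at h1 h2
    exact h2.2 h1
  set d : V → ℕ := fun v => (Nf.filter (fun w => G.Adj v w)).card with hddef
  -- the subgraph of edges inside N
  let G' : SimpleGraph V :=
    { Adj := fun a b => G.Adj a b ∧ G.Adj u a ∧ G.Adj u b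
      symm := ⟨fun a b h => ⟨h.1.symm, h.2.2, h.2.1⟩⟩
      loopless := ⟨fun a h => G.loopless.irrefl a h.1⟩ }
  have hG'adj : ∀ a b, G'.Adj a b ↔ (G.Adj a b ∧ G.Adj u a ∧ G.Adj u b) := fun a b => Iff.rfl
  have hdeg2 : ∑ v, G'.degree v = 2 * G'.edgeFinset.card :=
    SimpleGraph.sum_degrees_eq_twice_card_edges G'
  have hdegd : ∀ v ∈ Nf, G'.degree v = d v := by
    intro v hv
    have hva : G.Adj u v := by
      rw [hNfdef] at hv
      simpa using hv
    have hnb : G'.neighborFinset v = Nf.filter (fun w => G.Adj v w) := by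
      ext w
      simp only [SimpleGraph.mem_neighborFinset, hG'adj, Finset.mem_filter, hNfdef,
        Finset.mem_univ, true_and]
      tauto
    rw [show G'.degree v = (G'.neighborFinset v).card from rfl, hnb, hddef]
  have hdeg0 : ∀ v, v ∉ Nf → G'.degree v = 0 := by
    intro v hv
    have hva : ¬ G.Adj u v := by
      rw [hNfdef] at hv
      simpa using hv
    rw [show G'.degree v = (G'.neighborFinset v).card from rfl, Finset.card_eq_zero]
    ext w
    simp only [SimpleGraph.mem_neighborFinset, hG'adj, Finset.notMem_empty, iff_false]
    rintro ⟨-, h2, -⟩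
    exact hva h2
  have hsum_d : ∑ v ∈ Nf, d v = 2 * eIn G Ap := by
    have h1 : ∑ v ∈ Nf, d v = ∑ v, G'.degree v := by
      rw [← Finset.sum_subset (Finset.subset_univ Nf) (fun v _ hv => hdeg0 v hv)]
      exact Finset.sum_congr rfl (fun v hv => (hdegd v hv).symm)
    have hset : {e ∈ G.edgeSet | ∀ v ∈ e, v ∈ Ap} = G'.edgeSet := by
      rw [hApset]
      ext e
      induction e using Sym2.ind with
      | _ a b =>
        simp only [Set.mem_sep_iff, SimpleGraph.mem_edgeSet, Sym2.mem_iff, hG'adj,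
          Finset.coe_filter, Set.mem_setOf_eq, Finset.mem_univ, true_and, hApfdef,
          Finset.mem_coe, Finset.mem_filter]
        constructor
        · rintro ⟨hab, h⟩
          exact ⟨hab, (h a (Or.inl rfl)).1, (h b (Or.inr rfl)).1⟩
        · rintro ⟨hab, hua, hub⟩
          refine ⟨hab, ?_⟩
          rintro v (rfl | rfl)
          · exact ⟨hua, b, hub, hab⟩
          · exact ⟨hub, a, hua, hab.symm⟩
    have h2 : eIn G Ap = G'.edgeFinset.card := by
      rw [eIn, hset, ← SimpleGraph.coe_edgeFinset, Set.ncard_coe_finset]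
    rw [h1, hdeg2, h2]
  have hApsub : Apf ⊆ Nf := by
    intro v hv
    rw [hApfdef] at hv
    rw [hNfdef]
    simp only [Finset.mem_filter, Finset.mem_univ, true_and] at hv ⊢
    exact hv.1
  have hd_pos : ∀ w ∈ Apf, 1 ≤ d w := by
    intro w hw
    rw [hApfdef] at hw
    simp only [Finset.mem_filter, Finset.mem_univ, true_and] at hw
    obtain ⟨hw1, w', hw'1, hw'2⟩ := hw
    rw [hddef]
    refine Finset.card_pos.mpr ⟨w', ?_⟩
    rw [hNfdef]
    simp [hw'1, hw'2]
  have hd_zero : ∀ w ∈ A0f, d w = 0 := by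
    intro w hw
    rw [hA0fdef] at hw
    obtain ⟨hw1, hw2⟩ := Finset.mem_sdiff.mp hw
    have hw1' : G.Adj u w := by rw [hNfdef] at hw1; simpa using hw1
    rw [hddef]
    simp only []
    rw [Finset.card_eq_zero]
    ext w'
    simp only [Finset.mem_filter, Finset.notMem_empty, iff_false, not_and]
    intro h1 h2
    apply hw2
    have h1' : G.Adj u w' := by rw [hNfdef] at h1; simpa using h1
    rw [hApfdef]
    simp only [Finset.mem_filter, Finset.mem_univ, true_and]
    exact ⟨hw1', w', h1', h2⟩
  have hsum_dAp : ∑ w ∈ Apf, d w = 2 * eIn G Ap := by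
    have h0 : ∑ w ∈ A0f, d w = 0 := Finset.sum_eq_zero hd_zero
    have h1 := Finset.sum_sdiff (f := d) hApsub
    rw [hA0fdef] at h0
    rw [h0, zero_add] at h1
    rw [h1, hsum_d]
  -- edges between N and W
  set Pf : Finset (V × V) := (Nf ×ˢ Wf).filter (fun p => G.Adj p.1 p.2) with hPfdef
  have heB : eBetween G N W = Pf.card := by
    have hset : {e ∈ G.edgeSet | ∃ a ∈ N, ∃ b ∈ W, e = s(a, b)}
        = (fun p : V × V => s(p.1, p.2)) '' ↑Pf := by
      ext e
      constructor
      · rintro ⟨he, a, ha, b, hb, rfl⟩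
        refine ⟨(a, b), ?_, rfl⟩
        rw [hPfdef]
        simp only [Finset.coe_filter, Set.mem_setOf_eq, Finset.mem_product]
        rw [hNset] at ha; rw [hWset] at hb
        exact ⟨⟨ha, hb⟩, he⟩
      · rintro ⟨⟨a, b⟩, hp, rfl⟩
        rw [hPfdef] at hp
        simp only [Finset.coe_filter, Set.mem_setOf_eq, Finset.mem_product] at hp
        obtain ⟨⟨ha, hb⟩, hadj⟩ := hp
        exact ⟨hadj, a, hNset ▸ ha, b, hWset ▸ hb, rfl⟩
    have hinj : Set.InjOn (fun p : V × V => s(p.1, p.2)) ↑Pf := by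
      rintro ⟨a, b⟩ hab ⟨c, e⟩ hce he
      rw [hPfdef] at hab hce
      simp only [Finset.coe_filter, Set.mem_setOf_eq, Finset.mem_product] at hab hce
      simp only [Sym2.eq_iff] at he
      rcases he with ⟨h1, h2⟩ | ⟨h1, h2⟩
      · rw [h1, h2]
      · exact (hNWdisj e (h1 ▸ hab.1.1) hce.1.2).elim
    rw [eBetween, hset, Set.ncard_image_of_injOn hinj, Set.ncard_coe_finset]
  have hPfcard : Pf.card = ∑ v ∈ Nf, (Wf.filter (fun w => G.Adj v w)).card := by
    rw [hPfdef, Finset.card_filter, Finset.sum_product]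
    exact Finset.sum_congr rfl (fun v _ => (Finset.card_filter _ _).symm)
  -- decomposition of neighbor sums
  have hdecomp : ∀ v ∈ Nf,
      ∑ w ∈ Finset.univ.filter (fun w => G.Adj v w), x w
      = x u + (∑ w ∈ Nf.filter (fun w => G.Adj v w), x w
          + ∑ w ∈ Wf.filter (fun w => G.Adj v w), x w) := by
    intro v hv
    have hva : G.Adj u v := by rw [hNfdef] at hv; simpa using hv
    have hu_mem : u ∈ Finset.univ.filter (fun w => G.Adj v w) := by
      simp [hva.symm]
    rw [← Finset.add_sum_erase _ x hu_mem]
    congr 1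
    have hsplit : (Finset.univ.filter (fun w => G.Adj v w)).erase u
        = Nf.filter (fun w => G.Adj v w) ∪ Wf.filter (fun w => G.Adj v w) := by
      ext w
      simp only [Finset.mem_erase, Finset.mem_filter, Finset.mem_union, Finset.mem_univ,
        true_and, hNfdef, hWfdef]
      constructor
      · rintro ⟨hwu, hadj⟩
        by_cases h : G.Adj u w
        · exact Or.inl ⟨h, hadj⟩
        · exact Or.inr ⟨⟨hwu, h⟩, hadj⟩
      · rintro (⟨h1, h2⟩ | ⟨⟨h1, _⟩, h3⟩)
        · exact ⟨h1.ne', h2⟩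
        · exact ⟨h1, h3⟩
    have hdisj : Disjoint (Nf.filter (fun w => G.Adj v w)) (Wf.filter (fun w => G.Adj v w)) :=
      Finset.disjoint_left.mpr (fun w hw1 hw2 =>
        hNWdisj w (Finset.mem_filter.mp hw1).1 (Finset.mem_filter.mp hw2).1)
    rw [hsplit, Finset.sum_union hdisj]
  have hmain : (ρ * ρ - ρ) * x u
      = (Nf.card : ℝ) * x u
        + (∑ v ∈ Nf, ∑ w ∈ Nf.filter (fun w => G.Adj v w), x w)
        + (∑ v ∈ Nf, ∑ w ∈ Wf.filter (fun w => G.Adj v w), x w)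
        - ∑ v ∈ Nf, x v := by
    have h1 : ρ * (ρ * x u) = ∑ v ∈ Nf, (x u + (∑ w ∈ Nf.filter (fun w => G.Adj v w), x w
        + ∑ w ∈ Wf.filter (fun w => G.Adj v w), x w)) := by
      rw [← hrho_u, Finset.mul_sum]
      refine Finset.sum_congr rfl (fun v hv => ?_)
      rw [← heq v, hdecomp v hv]
    have h2 : (ρ * ρ - ρ) * x u = ρ * (ρ * x u) - ρ * x u := by ring
    rw [h2, h1, ← hrho_u, Finset.sum_add_distrib, Finset.sum_add_distrib,
      Finset.sum_const, nsmul_eq_mul]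
    ring
  have hB : ∑ v ∈ Nf, ∑ w ∈ Nf.filter (fun w => G.Adj v w), x w
      = ∑ w ∈ Nf, (d w : ℝ) * x w := by
    calc ∑ v ∈ Nf, ∑ w ∈ Nf.filter (fun w => G.Adj v w), x w
        = ∑ v ∈ Nf, ∑ w ∈ Nf, (if G.Adj v w then x w else 0) :=
          Finset.sum_congr rfl (fun v _ => Finset.sum_filter _ _)
      _ = ∑ w ∈ Nf, ∑ v ∈ Nf, (if G.Adj v w then x w else 0) := Finset.sum_comm
      _ = ∑ w ∈ Nf, (d w : ℝ) * x w := by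
          refine Finset.sum_congr rfl (fun w _ => ?_)
          rw [← Finset.sum_filter, Finset.sum_const, nsmul_eq_mul]
          have hcard : (Nf.filter (fun v => G.Adj v w)).card = d w := by
            rw [hddef]
            congr 1
            apply Finset.filter_congr
            intro v _
            simp [G.adj_comm]
          rw [hcard]
  have hsplitN : ∀ f : V → ℝ, ∑ v ∈ Nf, f v = ∑ v ∈ A0f, f v + ∑ v ∈ Apf, f v := by
    intro f
    rw [hA0fdef]
    exact (Finset.sum_sdiff hApsub).symm
  have hBbound : ∑ w ∈ Nf, (d w : ℝ) * x w - ∑ v ∈ Apf, x v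
      ≤ (2 * (eIn G Ap : ℝ) - (Apf.card : ℝ)) * x u := by
    have h1 : ∑ w ∈ Nf, (d w : ℝ) * x w = ∑ w ∈ Apf, (d w : ℝ) * x w := by
      rw [hsplitN]
      have h0 : ∑ w ∈ A0f, (d w : ℝ) * x w = 0 :=
        Finset.sum_eq_zero (fun w hw => by rw [hd_zero w hw]; simp)
      rw [h0, zero_add]
    rw [h1, ← Finset.sum_sub_distrib]
    have h2 : ∀ w ∈ Apf, (d w : ℝ) * x w - x w ≤ ((d w : ℝ) - 1) * x u := by
      intro w hw
      have he : (d w : ℝ) * x w - x w = ((d w : ℝ) - 1) * x w := by ring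
      rw [he]
      have hd1 : (1:ℝ) ≤ (d w : ℝ) := by exact_mod_cast hd_pos w hw
      exact mul_le_mul_of_nonneg_left (hmaxx w) (by linarith)
    calc ∑ w ∈ Apf, ((d w : ℝ) * x w - x w) ≤ ∑ w ∈ Apf, ((d w : ℝ) - 1) * x u :=
          Finset.sum_le_sum h2
      _ = (∑ w ∈ Apf, ((d w : ℝ) - 1)) * x u := (Finset.sum_mul _ _ _).symm
      _ = (2 * (eIn G Ap : ℝ) - (Apf.card : ℝ)) * x u := by
          congr 1
          rw [Finset.sum_sub_distrib, Finset.sum_const, nsmul_eq_mul, mul_one]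
          congr 1
          rw [← Nat.cast_sum, hsum_dAp]
          push_cast
          ring
  have hCbound : ∑ v ∈ Nf, ∑ w ∈ Wf.filter (fun w => G.Adj v w), x w
      ≤ (eBetween G N W : ℝ) * x u := by
    have h1 : ∀ v ∈ Nf, ∑ w ∈ Wf.filter (fun w => G.Adj v w), x w
        ≤ ((Wf.filter (fun w => G.Adj v w)).card : ℝ) * x u := by
      intro v _
      calc ∑ w ∈ Wf.filter (fun w => G.Adj v w), x w
          ≤ ∑ _w ∈ Wf.filter (fun w => G.Adj v w), x u :=
            Finset.sum_le_sum (fun w _ => hmaxx w)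
        _ = ((Wf.filter (fun w => G.Adj v w)).card : ℝ) * x u := by
            rw [Finset.sum_const, nsmul_eq_mul]
    calc ∑ v ∈ Nf, ∑ w ∈ Wf.filter (fun w => G.Adj v w), x w
        ≤ ∑ v ∈ Nf, ((Wf.filter (fun w => G.Adj v w)).card : ℝ) * x u :=
          Finset.sum_le_sum h1
      _ = ((∑ v ∈ Nf, (Wf.filter (fun w => G.Adj v w)).card : ℕ) : ℝ) * x u := by
          rw [← Finset.sum_mul, Nat.cast_sum]
      _ = (eBetween G N W : ℝ) * x u := by rw [heB, hPfcard]
  have hNcard : (N.ncard : ℝ) = (Nf.card : ℝ) := by rw [hNset, Set.ncard_coe_finset]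
  have hApcard : (Ap.ncard : ℝ) = (Apf.card : ℝ) := by rw [hApset, Set.ncard_coe_finset]
  have hfinal : (ρ * ρ - ρ) * x u
      ≤ ((N.ncard : ℝ) + 2 * (eIn G Ap : ℝ) - (Ap.ncard : ℝ) + (eBetween G N W : ℝ)) * x u
        - ∑ v ∈ A0f, x v := by
    rw [hmain, hB, hsplitN x, hNcard, hApcard]
    nlinarith [hBbound, hCbound]
  rw [hA0set, finsum_mem_coe_finset, ← Finset.sum_div]
  have hKeq : ((N.ncard : ℝ) + 2 * (eIn G Ap : ℝ) - (Ap.ncard : ℝ) + (eBetween G N W : ℝ))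
      - (∑ v ∈ A0f, x v) / x u
      = (((N.ncard : ℝ) + 2 * (eIn G Ap : ℝ) - (Ap.ncard : ℝ) + (eBetween G N W : ℝ)) * x u
        - ∑ v ∈ A0f, x v) / x u := by
    field_simp
  rw [hKeq, le_div_iff₀ hxu]
  calc (ρ ^ 2 - ρ) * x u = (ρ * ρ - ρ) * x u := by ring
    _ ≤ _ := hfinal
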